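/- Let θ1, θ2 ∈ ℝ. Let c, s, c', s' be complex numbers satisfying c·s' − s·c' = 1 and c = s'. Then there exists a nonzero vector (A1, ..., A6, B1, ..., B6) ∈ ℂ¹² satisfying the homogeneous system: A1 = A3 = A4 = A6; B1 + B3 + B4 + B6 = 0; A2·c + B2·s = A3·c + B3·s = exp(i·θ1)·(A4·c + B4·s) = exp(i·θ1)·(A5·c + B5·s); (A2·c' + B2·s') + (A3·c' + B3·s') + exp(i·θ1)·(A4·c' + B4·s') + exp(i·θ1)·(A5·c' + B5·s') = 0; A2 = exp(i·θ2)·A5 = exp(i·θ2)·(A6·c + B6·s) = A1·c + B1·s; and −B2 − exp(i·θ2)·B5 + exp(i·θ2)·(A6·c' + B6·s') + (A1·c' + B1·s') = 0, if and only if s³·(2·s' + 1)·(2·s'² − s' − cos(θ1/2)·cos(θ2/2)·cos((θ1−θ2)/2)) = 0. (This is the dispersion relation of the periodic quantum graph associated with the trihexagonal tiling (3,6,3,6) with identical even edge potentials.) -/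

import Mathlib

/-- Product of three cosines in terms of the Bloch phases. -/
private lemma cos_prod_identity (θ1 θ2 : ℝ) :
    8 * ((Real.cos (θ1 / 2) : ℂ) * (Real.cos (θ2 / 2) : ℂ) * (Real.cos ((θ1 - θ2) / 2) : ℂ))
        * Complex.exp (Complex.I * θ1) * Complex.exp (Complex.I * θ2)
      = Complex.exp (Complex.I * θ1) ^ 2 * Complex.exp (Complex.I * θ2)
        + Complex.exp (Complex.I * θ1) * Complex.exp (Complex.I * θ2) ^ 2
        + Complex.exp (Complex.I * θ1) ^ 2 + Complex.exp (Complex.I * θ2) ^ 2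
        + Complex.exp (Complex.I * θ1) + Complex.exp (Complex.I * θ2)
        + 2 * Complex.exp (Complex.I * θ1) * Complex.exp (Complex.I * θ2) := by
  have e : ∀ x : ℝ, (Real.cos x : ℂ)
      = (Complex.exp (Complex.I * x) + (Complex.exp (Complex.I * x))⁻¹) / 2 := by
    intro x
    rw [Complex.ofReal_cos, Complex.cos, ← Complex.exp_neg, mul_comm (x : ℂ) Complex.I,
      neg_mul, mul_comm (x : ℂ) Complex.I, ← neg_mul]
  have ha : Complex.exp (Complex.I * ((θ1 / 2 : ℝ) : ℂ)) ≠ 0 := Complex.exp_ne_zero _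
  have hb : Complex.exp (Complex.I * ((θ2 / 2 : ℝ) : ℂ)) ≠ 0 := Complex.exp_ne_zero _
  have hu : Complex.exp (Complex.I * ((θ1 / 2 : ℝ) : ℂ)) * Complex.exp (Complex.I * ((θ1 / 2 : ℝ) : ℂ))
      = Complex.exp (Complex.I * θ1) := by
    rw [← Complex.exp_add]; congr 1; push_cast; ring
  have hv : Complex.exp (Complex.I * ((θ2 / 2 : ℝ) : ℂ)) * Complex.exp (Complex.I * ((θ2 / 2 : ℝ) : ℂ))
      = Complex.exp (Complex.I * θ2) := by
    rw [← Complex.exp_add]; congr 1; push_cast; ring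
  have hw : Complex.exp (Complex.I * (((θ1 - θ2) / 2 : ℝ) : ℂ))
      = Complex.exp (Complex.I * ((θ1 / 2 : ℝ) : ℂ)) * (Complex.exp (Complex.I * ((θ2 / 2 : ℝ) : ℂ)))⁻¹ := by
    rw [← Complex.exp_neg, ← Complex.exp_add]; congr 1; push_cast; ring
  rw [e (θ1 / 2), e (θ2 / 2), e ((θ1 - θ2) / 2), ← hu, ← hv, hw]
  field_simp
  ring

set_option maxHeartbeats 1000000 in
/-- Dispersion relation of the periodic quantum graph associated with the
trihexagonal tiling `(3,6,3,6)` with identical even edge potentials. -/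
theorem trihexagonal_tiling_dispersion_relation
    (θ1 θ2 : ℝ) (c s c' s' : ℂ)
    (hW : c * s' - s * c' = 1) (hE : c = s') :
    (∃ A1 A2 A3 A4 A5 A6 B1 B2 B3 B4 B5 B6 : ℂ,
      (A1, A2, A3, A4, A5, A6, B1, B2, B3, B4, B5, B6)
        ≠ (0, 0, 0, 0, 0, 0, 0, 0, 0, 0, 0, 0) ∧
      (A1 = A3 ∧ A3 = A4 ∧ A4 = A6 ∧
       B1 + B3 + B4 + B6 = 0 ∧
       A2 * c + B2 * s = A3 * c + B3 * s ∧
       A3 * c + B3 * s = Complex.exp (Complex.I * θ1) * (A4 * c + B4 * s) ∧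
       Complex.exp (Complex.I * θ1) * (A4 * c + B4 * s)
         = Complex.exp (Complex.I * θ1) * (A5 * c + B5 * s) ∧
       (A2 * c' + B2 * s') + (A3 * c' + B3 * s')
         + Complex.exp (Complex.I * θ1) * (A4 * c' + B4 * s')
         + Complex.exp (Complex.I * θ1) * (A5 * c' + B5 * s') = 0 ∧
       A2 = Complex.exp (Complex.I * θ2) * A5 ∧
       Complex.exp (Complex.I * θ2) * A5
         = Complex.exp (Complex.I * θ2) * (A6 * c + B6 * s) ∧
       Complex.exp (Complex.I * θ2) * (A6 * c + B6 * s) = A1 * c + B1 * s ∧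
       -B2 - Complex.exp (Complex.I * θ2) * B5
         + Complex.exp (Complex.I * θ2) * (A6 * c' + B6 * s')
         + (A1 * c' + B1 * s') = 0))
    ↔ s ^ 3 * (2 * s' + 1) * (2 * s' ^ 2 - s'
        - (Real.cos (θ1 / 2) : ℂ) * (Real.cos (θ2 / 2) : ℂ)
            * (Real.cos ((θ1 - θ2) / 2) : ℂ)) = 0 := by
  subst hE
  obtain ⟨E1, hE1def⟩ : ∃ E1, E1 = Complex.exp (Complex.I * θ1) := ⟨_, rfl⟩
  obtain ⟨E2, hE2def⟩ : ∃ E2, E2 = Complex.exp (Complex.I * θ2) := ⟨_, rfl⟩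
  obtain ⟨K, hKdef⟩ : ∃ K, K = (Real.cos (θ1 / 2) : ℂ) * (Real.cos (θ2 / 2) : ℂ)
      * (Real.cos ((θ1 - θ2) / 2) : ℂ) := ⟨_, rfl⟩
  have hE1 : E1 ≠ 0 := by rw [hE1def]; exact Complex.exp_ne_zero _
  have hE2 : E2 ≠ 0 := by rw [hE2def]; exact Complex.exp_ne_zero _
  have hK : 8 * K * E1 * E2
      = E1 ^ 2 * E2 + E1 * E2 ^ 2 + E1 ^ 2 + E2 ^ 2 + E1 + E2 + 2 * E1 * E2 := by
    rw [hE1def, hE2def, hKdef]; exact cos_prod_identity θ1 θ2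
  rw [← hE1def, ← hE2def, ← hKdef]
  by_cases hs : s = 0
  · subst hs
    refine iff_of_true ?_ (by ring)
    have hp : (c - 1) * (c + 1) = 0 := by linear_combination hW
    rcases mul_eq_zero.mp hp with h1 | h1
    · exact ⟨0, 0, 0, 0, 0, 0, -1, -1, 1, 0, 0, 0, by simp, rfl, rfl, rfl, by ring, by ring,
        by ring, by ring, by ring, by ring, by ring, by ring, by linear_combination -h1⟩
    · exact ⟨0, 0, 0, 0, 0, 0, -(E2 + 1), 1 - E2, E2 - 1, 0, 0, 2, by simp, rfl, rfl, rfl,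
        by ring, by ring, by ring, by ring, by ring, by ring, by ring, by ring,
        by linear_combination (E2 - 1) * h1⟩
  · have hC : s * c' = c ^ 2 - 1 := by linear_combination -hW
    have hc' : c' = (c ^ 2 - 1) / s := by rw [eq_div_iff hs]; linear_combination hC
    constructor
    · rintro ⟨A1, A2, A3, A4, A5, A6, B1, B2, B3, B4, B5, B6, hne,
        e1, e2, e3, e4, e5, e6, e7, e8, e9, e10, e11, e12⟩
      subst e1; subst e2; subst e3; subst e9
      have hcan : A5 = A1 * c + B6 * s := mul_left_cancel₀ hE2 e10
      have hb1 : s * B1 = E2 * A5 - c * A1 := by linear_combination -e10 - e11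
      have hb6 : s * B6 = A5 - c * A1 := by linear_combination -hcan
      have hb3 : s * B3 = s * B2 + c * (E2 * A5 - A1) := by linear_combination -e5
      have hb4 : s * E1 * B4 = s * B2 + c * (E2 * A5 - E1 * A1) := by
        linear_combination -e5 - e6
      have hb5 : s * E1 * B5 = s * B2 + c * (E2 - E1) * A5 := by
        linear_combination -e5 - e6 - e7
      have r1 : (-4 * c * E1) * A1 + (E1 + E1 * E2 + c * E2 + c * E1 * E2) * A5
          + (s + s * E1) * B2 = 0 := by
        linear_combination (s * E1) * e4 - E1 * hb1 - E1 * hb3 - hb4 - E1 * hb6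
      have r2 : (-E1 - E1 ^ 2) * A1 + (-E1 * E2 - E1 ^ 2 + 4 * c ^ 2 * E1 * E2) * A5
          + (4 * s * c * E1) * B2 = 0 := by
        linear_combination (s * E1) * e8 - (E1 * (E2 * A5 + A1 + E1 * A1 + E1 * A5)) * hC
          - (c * E1) * hb3 - (c * E1) * hb4 - (c * E1) * hb5
      have r3 : (-E1 - E1 * E2) * A1 + (-c * E2 ^ 2 + 3 * c * E1 * E2) * A5
          + (-s * E2 - s * E1) * B2 = 0 := by
        linear_combination (s * E1) * e12 - (E1 * A1 * (E2 + 1)) * hC + E2 * hb5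
          - (c * E1 * E2) * hb6 - (c * E1) * hb1
      have d1 : (16 * s * E1 ^ 3 * E2 * ((2 * c + 1) * (2 * c ^ 2 - c - K))) * A1 = 0 := by
        linear_combination
          (s * E1 * E2 ^ 2 + 2 * s * E1 ^ 2 * E2 + s * E1 ^ 3 - 16 * s * c ^ 2 * E1 ^ 2 * E2) * r1
          + (s * E1 * E2 + s * E1 * E2 ^ 2 + s * E1 ^ 2 + s * E1 ^ 2 * E2 + 4 * s * c * E1 * E2
              + 4 * s * c * E1 ^ 2 * E2) * r2
          + (s * E1 * E2 + s * E1 ^ 2 + s * E1 ^ 2 * E2 + s * E1 ^ 3 + 4 * s * c * E1 ^ 2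
              + 4 * s * c * E1 ^ 2 * E2) * r3
          - (2 * s * E1 ^ 2 * (2 * c + 1) * A1) * hK
      have d2 : (16 * s * E1 ^ 3 * E2 * ((2 * c + 1) * (2 * c ^ 2 - c - K))) * A5 = 0 := by
        linear_combination
          (-(s * E1 * E2) - s * E1 ^ 2 - s * E1 ^ 2 * E2 - s * E1 ^ 3 - 4 * s * c * E1 ^ 2
              - 4 * s * c * E1 ^ 2 * E2) * r1
          + (s * E1 + s * E1 * E2 + s * E1 ^ 2 + s * E1 ^ 2 * E2 + 4 * s * c * E1 * E2
              + 4 * s * c * E1 ^ 2) * r2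
          + (-(s * E1) - 2 * s * E1 ^ 2 - s * E1 ^ 3 + 16 * s * c ^ 2 * E1 ^ 2) * r3
          - (2 * s * E1 ^ 2 * (2 * c + 1) * A5) * hK
      have d3 : (16 * s * E1 ^ 3 * E2 * ((2 * c + 1) * (2 * c ^ 2 - c - K))) * B2 = 0 := by
        linear_combination
          (-(E1 ^ 2 * E2) - E1 ^ 2 * E2 ^ 2 - E1 ^ 3 - E1 ^ 3 * E2 + c * E1 * E2 ^ 2
              - 3 * c * E1 ^ 2 * E2 + c * E1 ^ 2 * E2 ^ 2 - 3 * c * E1 ^ 3 * E2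
              + 4 * c ^ 2 * E1 ^ 2 * E2 + 4 * c ^ 2 * E1 ^ 2 * E2 ^ 2) * r1
          + (-(E1 ^ 2) - 2 * E1 ^ 2 * E2 - E1 ^ 2 * E2 ^ 2 - c * E1 * E2 - c * E1 * E2 ^ 2
              - c * E1 ^ 2 * E2 - c * E1 ^ 2 * E2 ^ 2 - 4 * c ^ 2 * E1 * E2 ^ 2
              + 12 * c ^ 2 * E1 ^ 2 * E2) * r2
          + (E1 ^ 2 + E1 ^ 2 * E2 + E1 ^ 3 + E1 ^ 3 * E2 + c * E1 * E2 + 6 * c * E1 ^ 2 * E2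
              + 4 * c * E1 ^ 3 + c * E1 ^ 3 * E2 - 16 * c ^ 3 * E1 ^ 2 * E2) * r3
          - (2 * s * E1 ^ 2 * (2 * c + 1) * B2) * hK
      by_contra hgoal
      have hbig : (2 * c + 1) * (2 * c ^ 2 - c - K) ≠ 0 := fun h =>
        hgoal (by linear_combination s ^ 3 * h)
      have h16 : (16 * s * E1 ^ 3 * E2 : ℂ) ≠ 0 :=
        mul_ne_zero (mul_ne_zero (mul_ne_zero (by norm_num) hs) (pow_ne_zero 3 hE1)) hE2
      have hcoef : (16 * s * E1 ^ 3 * E2 * ((2 * c + 1) * (2 * c ^ 2 - c - K)) : ℂ) ≠ 0 :=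
        mul_ne_zero h16 hbig
      have hA1 : A1 = 0 := (mul_eq_zero.mp d1).resolve_left hcoef
      have hA5 : A5 = 0 := (mul_eq_zero.mp d2).resolve_left hcoef
      have hB2 : B2 = 0 := (mul_eq_zero.mp d3).resolve_left hcoef
      have hsE1 : s * E1 ≠ 0 := mul_ne_zero hs hE1
      have hB1 : B1 = 0 := by
        have : s * B1 = 0 := by rw [hA1, hA5] at hb1; linear_combination hb1
        exact (mul_eq_zero.mp this).resolve_left hs
      have hB6 : B6 = 0 := by
        have : s * B6 = 0 := by rw [hA1, hA5] at hb6; linear_combination hb6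
        exact (mul_eq_zero.mp this).resolve_left hs
      have hB3 : B3 = 0 := by
        have : s * B3 = 0 := by rw [hA1, hA5, hB2] at hb3; linear_combination hb3
        exact (mul_eq_zero.mp this).resolve_left hs
      have hB4 : B4 = 0 := by
        have : s * E1 * B4 = 0 := by rw [hA1, hA5, hB2] at hb4; linear_combination hb4
        exact (mul_eq_zero.mp this).resolve_left hsE1
      have hB5 : B5 = 0 := by
        have : s * E1 * B5 = 0 := by rw [hA5, hB2] at hb5; linear_combination hb5
        exact (mul_eq_zero.mp this).resolve_left hsE1
      exact hne (by rw [hA1, hA5, hB1, hB2, hB3, hB4, hB5, hB6]; simp)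
    · intro hD
      have hΔ : (2 * c + 1) * (2 * c ^ 2 - c - K) = 0 := by
        have h0 : s ^ 3 * ((2 * c + 1) * (2 * c ^ 2 - c - K)) = 0 := by
          linear_combination hD
        exact (mul_eq_zero.mp h0).resolve_left (pow_ne_zero 3 hs)
      obtain ⟨M, hMdef⟩ : ∃ M : Matrix (Fin 3) (Fin 3) ℂ,
          M = !![-4 * c * E1, E1 + E1 * E2 + c * E2 + c * E1 * E2, s + s * E1;
                 -E1 - E1 ^ 2, -E1 * E2 - E1 ^ 2 + 4 * c ^ 2 * E1 * E2, 4 * s * c * E1;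
                 -E1 - E1 * E2, -c * E2 ^ 2 + 3 * c * E1 * E2, -s * E2 - s * E1] := ⟨_, rfl⟩
      have hdet : M.det = 0 := by
        rw [hMdef, Matrix.det_fin_three]
        simp only [Matrix.of_apply, Matrix.cons_val', Matrix.cons_val_zero, Matrix.cons_val_one, Matrix.cons_val_two, Matrix.head_cons, Matrix.tail_cons, Matrix.empty_val', Matrix.cons_val_fin_one]
        norm_num
        linear_combination (16 * s * E1 ^ 3 * E2) * hΔ + (2 * s * E1 ^ 2 * (2 * c + 1)) * hK
      obtain ⟨v, hv0, hvz⟩ := Matrix.exists_mulVec_eq_zero_iff.mpr hdet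
      have r1 : (-4 * c * E1) * v 0 + (E1 + E1 * E2 + c * E2 + c * E1 * E2) * v 1
          + (s + s * E1) * v 2 = 0 := by
        have := congrFun hvz 0
        rw [hMdef] at this
        simpa [Matrix.mulVec, dotProduct, Fin.sum_univ_three, Matrix.vecHead, Matrix.vecTail] using this
      have r2 : (-E1 - E1 ^ 2) * v 0 + (-E1 * E2 - E1 ^ 2 + 4 * c ^ 2 * E1 * E2) * v 1
          + (4 * s * c * E1) * v 2 = 0 := by
        have := congrFun hvz 1
        rw [hMdef] at this
        simpa [Matrix.mulVec, dotProduct, Fin.sum_univ_three, Matrix.vecHead, Matrix.vecTail] using this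
      have r3 : (-E1 - E1 * E2) * v 0 + (-c * E2 ^ 2 + 3 * c * E1 * E2) * v 1
          + (-s * E2 - s * E1) * v 2 = 0 := by
        have := congrFun hvz 2
        rw [hMdef] at this
        simpa [Matrix.mulVec, dotProduct, Fin.sum_univ_three, Matrix.vecHead, Matrix.vecTail] using this
      refine ⟨v 0, E2 * v 1, v 0, v 0, v 1, v 0,
        (E2 * v 1 - c * v 0) / s, v 2, v 2 + c * (E2 * v 1 - v 0) / s,
        (s * v 2 + c * (E2 * v 1 - E1 * v 0)) / (s * E1),
        (s * v 2 + c * (E2 - E1) * v 1) / (s * E1),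
        (v 1 - c * v 0) / s, ?_, rfl, rfl, rfl, ?_, ?_, ?_, ?_, ?_, rfl, ?_, ?_, ?_⟩
      · intro h
        simp only [Prod.mk.injEq] at h
        apply hv0
        funext i
        fin_cases i
        · exact h.1
        · exact h.2.2.2.2.1
        · exact h.2.2.2.2.2.2.2.1
      · -- e4
        field_simp
        all_goals linear_combination r1
      · -- e5
        field_simp
        all_goals first | exact Or.inl trivial | (left; ring) | ring
      · -- e6
        field_simp
        all_goals first | exact Or.inl trivial | (left; ring) | ring
      · -- e7
        field_simp
        all_goals first | exact Or.inl trivial | (left; ring) | ring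
      · -- e8
        field_simp
        all_goals (apply mul_left_cancel₀ hE1; linear_combination (E1 * (v 0 + E2 * v 1 + E1 * v 1 + E1 * v 0)) * hC + r2)
      · -- e10
        field_simp
        all_goals first | exact Or.inl trivial | (left; ring) | ring
      · -- e11
        field_simp
        all_goals first | exact Or.inl trivial | (left; ring) | ring
      · -- e12
        field_simp
        all_goals linear_combination (E1 * (1 + E2) * v 0) * hC + r3
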